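/- Fix a free ultrafilter 𝒰 on ℕ, t ∈ [0,1], and θ = 2^t. Let ν_ω : 𝒫(ℕ) → ℝ be the function such that for every A ⊆ ℕ, the sequence n ↦ |A ∩ [1, ⌊θ·2ⁿ⌋]|/(θ·2ⁿ) converges to ν_ω(A) along 𝒰, and for each m ∈ ℕ let ν_{ω,m} : 𝒫(ℕ) → ℝ be the function such that the sequence n ↦ |A ∩ (⌊θ·2^{n−m−1}⌋, ⌊θ·2^{n−m}⌋]| / (θ·2^{n−m−1}) converges to ν_{ω,m}(A) along 𝒰. Then for every A ⊆ ℕ, ν_ω(A) = Σ_{m=0}^{∞} 2^{−(m+1)} ν_{ω,m}(A). -/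

import Mathlib

open Filter Topology

/-- The `n`-th approximant of the density measure `ν_ω` for `θ = 2^t`:
`|A ∩ [1, ⌊θ·2ⁿ⌋]| / (θ·2ⁿ)`. -/
noncomputable def mainDensity (t : ℝ) (A : Set ℕ) (n : ℕ) : ℝ :=
  (A ∩ Set.Icc 1 ⌊(2 : ℝ) ^ t * 2 ^ n⌋₊).ncard / ((2 : ℝ) ^ t * 2 ^ n)

/-- The `n`-th approximant of the auxiliary charge `ν_{ω,m}` for `θ = 2^t`:
`|A ∩ (⌊θ·2^{n-m-1}⌋, ⌊θ·2^{n-m}⌋]| / (θ·2^{n-m-1})`. -/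
noncomputable def auxDensity (t : ℝ) (m : ℕ) (A : Set ℕ) (n : ℕ) : ℝ :=
  (A ∩ Set.Ioc ⌊(2 : ℝ) ^ t * 2 ^ ((n : ℝ) - m - 1)⌋₊
      ⌊(2 : ℝ) ^ t * 2 ^ ((n : ℝ) - m)⌋₊).ncard /
    ((2 : ℝ) ^ t * 2 ^ ((n : ℝ) - m - 1))

lemma ncard_split (A : Set ℕ) (a c : ℕ) (h : a ≤ c) :
    (A ∩ Set.Icc 1 c).ncard
      = (A ∩ Set.Icc 1 a).ncard + (A ∩ Set.Ioc a c).ncard := by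
  have hsplit : Set.Icc 1 c = Set.Icc 1 a ∪ Set.Ioc a c := by
    ext x; simp only [Set.mem_Icc, Set.mem_union, Set.mem_Ioc]; omega
  rw [hsplit, Set.inter_union_distrib_left, Set.ncard_union_eq]
  rw [Set.disjoint_left]
  rintro x ⟨-, h1⟩ ⟨-, h2⟩
  simp only [Set.mem_Icc] at h1; simp only [Set.mem_Ioc] at h2; omega

lemma count_decomp (A : Set ℕ) (b : ℕ → ℕ) (hb : ∀ k, b (k + 1) ≤ b k) (M : ℕ) :
    (A ∩ Set.Icc 1 (b 0)).ncard
      = (∑ m ∈ Finset.range M, (A ∩ Set.Ioc (b (m + 1)) (b m)).ncard)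
        + (A ∩ Set.Icc 1 (b M)).ncard := by
  induction M with
  | zero => simp
  | succ M ih =>
      rw [Finset.sum_range_succ, ih, add_assoc, ncard_split A (b (M + 1)) (b M) (hb M)]
      ring

lemma key_decomp (t : ℝ) (A : Set ℕ) (M n : ℕ) :
    mainDensity t A n
      = (∑ m ∈ Finset.range M, auxDensity t m A n / 2 ^ (m + 1))
        + ((A ∩ Set.Icc 1 ⌊(2:ℝ)^t * 2^((n:ℝ) - M)⌋₊).ncard : ℝ)
            / ((2:ℝ)^t * 2 ^ n) := by
  have h2 : (0:ℝ) < 2 := two_pos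
  set θ : ℝ := (2:ℝ)^t with hθdef
  have hθ : 0 < θ := Real.rpow_pos_of_pos h2 t
  set b : ℕ → ℕ := fun k => ⌊θ * 2^((n:ℝ) - k)⌋₊ with hbdef
  have hb : ∀ k, b (k+1) ≤ b k := by
    intro k
    apply Nat.floor_le_floor
    apply mul_le_mul_of_nonneg_left _ hθ.le
    apply Real.rpow_le_rpow_of_exponent_le one_le_two
    push_cast; linarith
  have hb0 : ⌊θ * (2:ℝ)^n⌋₊ = b 0 := by
    simp [hbdef, Real.rpow_natCast]
  rw [mainDensity, hb0, count_decomp A b hb M]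
  push_cast
  rw [add_div, Finset.sum_div]
  congr 1
  apply Finset.sum_congr rfl
  intro m hm
  rw [auxDensity, div_div]
  have hden : θ * 2^((n:ℝ) - m - 1) * 2^(m+1) = θ * (2:ℝ)^n := by
    rw [mul_assoc, ← Real.rpow_natCast (2:ℝ) (m+1), ← Real.rpow_add h2,
      ← Real.rpow_natCast (2:ℝ) n]
    congr 1
    push_cast; ring
  rw [hden]
  have harg : (n:ℝ) - ((m+1:ℕ):ℝ) = (n:ℝ) - m - 1 := by push_cast; ring
  simp only [hbdef, harg]
  rw [hθdef]

lemma tail_le (t : ℝ) (A : Set ℕ) (M n : ℕ) :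
    ((A ∩ Set.Icc 1 ⌊(2:ℝ)^t * 2^((n:ℝ) - M)⌋₊).ncard : ℝ)
        / ((2:ℝ)^t * 2 ^ n) ≤ (1/2 : ℝ)^M := by
  have h2 : (0:ℝ) < 2 := two_pos
  set θ : ℝ := (2:ℝ)^t with hθdef
  have hθ : 0 < θ := Real.rpow_pos_of_pos h2 t
  have hden : (0:ℝ) < θ * 2^n := by positivity
  set F : ℕ := ⌊θ * 2^((n:ℝ) - M)⌋₊ with hF
  have hcount : ((A ∩ Set.Icc 1 F).ncard : ℝ) ≤ (F : ℝ) := by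
    have h1 : (A ∩ Set.Icc 1 F).ncard ≤ (Set.Icc 1 F).ncard :=
      Set.ncard_le_ncard Set.inter_subset_right (Set.finite_Icc _ _)
    have h2 : (Set.Icc 1 F).ncard = F := by
      rw [← Finset.coe_Icc, Set.ncard_coe_finset, Nat.card_Icc]; omega
    exact_mod_cast h1.trans_eq h2
  have hF' : (F : ℝ) ≤ θ * 2^((n:ℝ) - M) :=
    Nat.floor_le (by positivity)
  have hkey : θ * 2^((n:ℝ) - M) / (θ * 2^n) = (1/2 : ℝ)^M := by
    rw [← Real.rpow_natCast (2:ℝ) n, mul_div_mul_left _ _ hθ.ne',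
      ← Real.rpow_sub h2]
    have : (n:ℝ) - M - n = -(M:ℝ) := by ring
    rw [this, Real.rpow_neg (by norm_num), Real.rpow_natCast, ← inv_pow]
    norm_num
  calc ((A ∩ Set.Icc 1 F).ncard : ℝ) / (θ * 2^n)
      ≤ (θ * 2^((n:ℝ) - M)) / (θ * 2^n) := by
        gcongr
        exact hcount.trans hF'
    _ = (1/2 : ℝ)^M := hkey


/-- Decomposition of the density measure `ν_ω` as the weighted countable sum
`ν_ω = Σ_m 2^{-(m+1)} ν_{ω,m}` of the auxiliary charges. -/
theorem mainCharge_eq_tsum_auxCharges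
    (𝒰 : Ultrafilter ℕ) (hfree : (𝒰 : Filter ℕ) ≤ Filter.cofinite)
    (t : ℝ) (ht : t ∈ Set.Icc (0 : ℝ) 1)
    (ν : Set ℕ → ℝ)
    (hν : ∀ A : Set ℕ, Tendsto (mainDensity t A) (𝒰 : Filter ℕ) (𝓝 (ν A)))
    (νa : ℕ → Set ℕ → ℝ)
    (hνa : ∀ (m : ℕ) (A : Set ℕ),
      Tendsto (auxDensity t m A) (𝒰 : Filter ℕ) (𝓝 (νa m A))) :
    ∀ A : Set ℕ, ν A = ∑' m : ℕ, νa m A / 2 ^ (m + 1) := by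
  intro A
  have h2 : (0:ℝ) < 2 := two_pos
  have hθ : (0:ℝ) < (2:ℝ)^t := Real.rpow_pos_of_pos h2 t
  set f : ℕ → ℝ := fun m => νa m A / 2^(m+1) with hf
  have hS : ∀ M : ℕ, Tendsto (fun n => ∑ m ∈ Finset.range M, auxDensity t m A n / 2^(m+1))
      (𝒰 : Filter ℕ) (𝓝 (∑ m ∈ Finset.range M, f m)) := fun M =>
    tendsto_finset_sum _ (fun m _ => (hνa m A).div_const _)
  have htail0 : ∀ M n : ℕ,
      (0:ℝ) ≤ ((A ∩ Set.Icc 1 ⌊(2:ℝ)^t * 2^((n:ℝ) - M)⌋₊).ncard : ℝ) / ((2:ℝ)^t * 2^n) := by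
    intro M n; positivity
  have hlow : ∀ M : ℕ, ∑ m ∈ Finset.range M, f m ≤ ν A := by
    intro M
    refine le_of_tendsto_of_tendsto' (hS M) (hν A) (fun n => ?_)
    rw [key_decomp t A M n]
    exact le_add_of_nonneg_right (htail0 M n)
  have hup : ∀ M : ℕ, ν A ≤ ∑ m ∈ Finset.range M, f m + (1/2:ℝ)^M := by
    intro M
    refine le_of_tendsto_of_tendsto' (hν A) ((hS M).add tendsto_const_nhds) (fun n => ?_)
    rw [key_decomp t A M n]
    exact add_le_add_right (tail_le t A M n) _
  have hf0 : ∀ m, 0 ≤ f m := by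
    intro m
    apply div_nonneg _ (by positivity)
    refine le_of_tendsto_of_tendsto' tendsto_const_nhds (hνa m A) (fun n => ?_)
    rw [auxDensity]
    positivity
  have hsummable : Summable f := summable_of_sum_range_le hf0 hlow
  have h1 : Tendsto (fun M => ∑ m ∈ Finset.range M, f m) atTop (𝓝 (∑' m, f m)) :=
    hsummable.hasSum.tendsto_sum_nat
  have h2' : Tendsto (fun M => ∑ m ∈ Finset.range M, f m) atTop (𝓝 (ν A)) := by
    apply tendsto_of_tendsto_of_tendsto_of_le_of_le
      (g := fun M : ℕ => ν A - (1/2:ℝ)^M) (h := fun _ : ℕ => ν A)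
    · have hp : Tendsto (fun M : ℕ => (1/2:ℝ)^M) atTop (𝓝 0) :=
        tendsto_pow_atTop_nhds_zero_of_lt_one (by norm_num) (by norm_num)
      simpa using tendsto_const_nhds.sub hp
    · exact tendsto_const_nhds
    · intro M; linarith [hup M]
    · exact hlow
  exact (tendsto_nhds_unique h2' h1)
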